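/- Let X = [x_ij] be an n×n doubly stochastic matrix. Let DW(X) = max{∑_i x_{i,σ(i)} : σ a permutation with x_{i,σ(i)} > 0 for all i} − min{∑_i x_{i,σ(i)} : σ a permutation with x_{i,σ(i)} > 0 for all i}. Let θ*(X) be the minimum of ∑_{i=1}^n u_i + ∑_{j=1}^n v_j over all real vectors u, v with u_i + v_j ≥ x_ij for every position (i,j) with x_ij > 0, and let θ_*(X) be the maximum of ∑_{i=1}^n u_i + ∑_{j=1}^n v_j over all real vectors u, v with u_i + v_j ≤ x_ij for every position (i,j) with x_ij > 0. Then both optima are attained and DW(X) = θ*(X) − θ_*(X). -/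

import Mathlib

namespace DWAux

open List

variable {α : Type*}

/-- length of a walk `l` w.r.t. edge lengths `ℓ`. -/
def wlen (ℓ : α → α → ℝ) (l : List α) : ℝ := (List.zipWith ℓ l l.tail).sum

@[simp] lemma wlen_singleton (ℓ : α → α → ℝ) (a : α) : wlen ℓ [a] = 0 := by simp [wlen]

lemma wlen_cons (ℓ : α → α → ℝ) (x : α) (m : List α) (hm : m ≠ []) :
    wlen ℓ (x :: m) = ℓ x (m.head hm) + wlen ℓ m := by
  cases m with
  | nil => exact absurd rfl hm
  | cons b t => simp [wlen]

lemma zipWith_sub_sum (f g : α → α → ℝ) : ∀ (l l' : List α),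
    (List.zipWith (fun a b => f a b - g a b) l l').sum
      = (List.zipWith f l l').sum - (List.zipWith g l l').sum
  | [], _ => by simp
  | _ :: _, [] => by simp
  | a :: l, b :: l' => by
      simp only [List.zipWith_cons_cons, List.sum_cons, zipWith_sub_sum f g l l']; ring

lemma zipWith_snd_map (h : α → ℝ) : ∀ (l l' : List α), l.length = l'.length →
    List.zipWith (fun _ b => h b) l l' = l'.map h
  | [], [], _ => by simp
  | [], _ :: _, hl => by simp at hl
  | _ :: _, [], hl => by simp at hl
  | a :: l, b :: l', hl => by
      simp only [List.zipWith_cons_cons, List.map_cons]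
      rw [zipWith_snd_map h l l' (by simpa using hl)]

lemma zipWith_left_trunc (f : α → α → ℝ) : ∀ (l r l₂ : List α), r.length ≤ l.length →
    List.zipWith f (l ++ l₂) r = List.zipWith f l r
  | _, [], _, _ => by simp
  | [], _ :: _, _, h => by simp at h
  | a :: l, b :: r, l₂, h => by
      simp only [List.cons_append, List.zipWith_cons_cons]
      rw [zipWith_left_trunc f l r l₂ (by simpa using h)]

lemma zip_tail_concat_sum (ℓ : α → α → ℝ) : ∀ (l : List α) (hl : l ≠ []) (x : α),
    (List.zipWith ℓ l (l.tail ++ [x])).sum = wlen ℓ l + ℓ (l.getLast hl) x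
  | [], hl, _ => absurd rfl hl
  | [a], _, x => by simp [wlen]
  | a :: b :: t, _, x => by
      have := zip_tail_concat_sum ℓ (b :: t) (by simp) x
      simp only [List.tail_cons, List.cons_append, List.zipWith_cons_cons, List.sum_cons] at this ⊢
      rw [this, wlen_cons ℓ a (b :: t) (by simp), List.getLast_cons_cons]
      simp only [List.head_cons]
      ring

lemma wlen_concat (ℓ : α → α → ℝ) (l : List α) (hl : l ≠ []) (x : α) :
    wlen ℓ (l ++ [x]) = wlen ℓ l + ℓ (l.getLast hl) x := by
  have h1 : (l ++ [x]).tail = l.tail ++ [x] := by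
    cases l with
    | nil => exact absurd rfl hl
    | cons a t => simp
  have h2 : (l.tail ++ [x]).length ≤ l.length := by
    cases l with
    | nil => exact absurd rfl hl
    | cons a t => simp
  rw [wlen, h1, zipWith_left_trunc ℓ l (l.tail ++ [x]) [x] h2, zip_tail_concat_sum ℓ l hl x]

lemma wlen_append (ℓ : α → α → ℝ) : ∀ (a b : List α) (ha : a ≠ []) (hb : b ≠ []),
    wlen ℓ (a ++ b) = wlen ℓ a + ℓ (a.getLast ha) (b.head hb) + wlen ℓ b
  | [], _, ha, _ => absurd rfl ha
  | [x], b, _, hb => by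
      rw [List.singleton_append, wlen_cons ℓ x b hb, wlen_singleton]
      simp [List.getLast_singleton]
  | x :: y :: t, b, _, hb => by
      have IH := wlen_append ℓ (y :: t) b (by simp) hb
      have h1 : ((y :: t) ++ b) ≠ [] := by simp
      rw [List.cons_append, wlen_cons ℓ x ((y :: t) ++ b) h1,
        wlen_cons ℓ x (y :: t) (by simp), IH, List.getLast_cons_cons]
      have h3 : ((y :: t) ++ b).head h1 = y := by simp
      rw [h3]
      simp only [List.head_cons]
      ring


variable {n : ℕ}

/-- Finset containing all nodup lists over `Fin n`. -/
noncomputable def allNodupLists (n : ℕ) : Finset (List (Fin n)) :=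
  ((Finset.univ : Finset (Fin n)).toList.sublists.flatMap List.permutations).toFinset

lemma mem_allNodupLists {l : List (Fin n)} (hl : l.Nodup) : l ∈ allNodupLists n := by
  obtain ⟨l', hperm, hsub⟩ :=
    hl.subperm (fun x _ => Finset.mem_toList.2 (Finset.mem_univ x))
  simp only [allNodupLists, List.mem_toFinset, List.mem_flatMap]
  exact ⟨l', List.mem_sublists.2 hsub, List.mem_permutations.2 hperm.symm⟩

/-- nodup walks in digraph `E` ending at `i`. -/
noncomputable def walkSet (E : Fin n → Fin n → Prop) (i : Fin n) : Finset (List (Fin n)) := by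
  classical
  exact (allNodupLists n).filter
    (fun l => l ≠ [] ∧ l.Chain' E ∧ l.Nodup ∧ l.getLast? = some i)

lemma mem_walkSet {E : Fin n → Fin n → Prop} {i : Fin n} {l : List (Fin n)} :
    l ∈ walkSet E i ↔ l ≠ [] ∧ l.Chain' E ∧ l.Nodup ∧ l.getLast? = some i := by
  classical
  simp only [walkSet, Finset.mem_filter]
  constructor
  · rintro ⟨-, h⟩; convert h
  · intro h
    refine ⟨mem_allNodupLists h.2.2.1, ?_⟩
    convert h

lemma walkSet_nonempty (E : Fin n → Fin n → Prop) (i : Fin n) : (walkSet E i).Nonempty :=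
  ⟨[i], mem_walkSet.2 ⟨by simp, List.isChain_singleton i, by simp, by simp⟩⟩


lemma exists_potential (E : Fin n → Fin n → Prop) (ℓ : Fin n → Fin n → ℝ)
    (hcyc : ∀ (m : List (Fin n)) (hm : m ≠ []), m.Nodup → m.Chain' E →
      E (m.getLast hm) (m.head hm) → wlen ℓ m + ℓ (m.getLast hm) (m.head hm) ≤ 0) :
    ∃ π : Fin n → ℝ, ∀ i i', E i i' → π i + ℓ i i' ≤ π i' := by
  classical
  set π : Fin n → ℝ := fun i =>
    (((walkSet E i).image (wlen ℓ)).max' ((walkSet_nonempty E i).image _)) with hπ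
  have hub : ∀ i, ∀ l ∈ walkSet E i, wlen ℓ l ≤ π i := by
    intro i l hl
    exact Finset.le_max' _ _ (Finset.mem_image_of_mem _ hl)
  have hatt : ∀ i, ∃ l ∈ walkSet E i, π i = wlen ℓ l := by
    intro i
    have := Finset.max'_mem ((walkSet E i).image (wlen ℓ)) ((walkSet_nonempty E i).image _)
    rw [Finset.mem_image] at this
    obtain ⟨l, hl, hval⟩ := this
    exact ⟨l, hl, hval.symm⟩
  refine ⟨π, fun i i' hE => ?_⟩
  obtain ⟨l, hl, hval⟩ := hatt i
  obtain ⟨hne, hchain, hnodup, hlast⟩ := mem_walkSet.1 hl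
  have hlastl : l.getLast hne = i := by
    rw [List.getLast?_eq_getLast hne] at hlast
    exact Option.some.inj hlast
  by_cases hmem : i' ∈ l
  · -- split l = s ++ i' :: t
    obtain ⟨s, t, rfl⟩ := List.append_of_mem hmem
    have hAne : (s ++ [i']) ≠ [] := by simp
    have hA : (s ++ [i']) ∈ walkSet E i' := by
      refine mem_walkSet.2 ⟨hAne, ?_, ?_, by simp⟩
      · rcases List.isChain_append.1 (show ((s ++ [i']) ++ t).Chain' E by simpa using hchain)
          with ⟨h1, -, -⟩
        exact h1
      · exact ((List.sublist_append_left (s ++ [i']) t).nodup (by simpa using hnodup))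
    have hm : (i' :: t) ∈ walkSet E i := by
      refine mem_walkSet.2 ⟨by simp, ?_, ?_, ?_⟩
      · exact (List.isChain_append.1 hchain).2.1
      · exact (List.sublist_append_right s (i' :: t)).nodup hnodup
      · rw [List.getLast?_eq_getLast (by simp : (i' :: t) ≠ [])]
        congr 1
        rw [← hlastl]
        exact (List.getLast_append_of_ne_nil (l := s) _ (by simp)).symm
    -- cycle inequality on m := i' :: t
    have hmlast : (i' :: t).getLast (by simp) = i := by
      rw [← hlastl]
      exact (List.getLast_append_of_ne_nil (l := s) _ (by simp)).symm
    have hcy := hcyc (i' :: t) (by simp) ((List.sublist_append_right s (i' :: t)).nodup hnodup)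
      (List.isChain_append.1 hchain).2.1 (by rw [hmlast]; simpa using hE)
    rw [hmlast] at hcy
    simp only [List.head_cons] at hcy
    -- wlen l = wlen (s ++ [i']) + wlen (i' :: t)
    have hsplit : wlen ℓ (s ++ i' :: t) = wlen ℓ (s ++ [i']) + wlen ℓ (i' :: t) := by
      cases s with
      | nil => simp
      | cons a s' =>
        cases t with
        | nil => simp
        | cons b t' =>
          have e1 : (a :: s') ++ i' :: (b :: t') = ((a :: s') ++ [i']) ++ (b :: t') := by simp
          rw [e1, wlen_append ℓ ((a :: s') ++ [i']) (b :: t') (by simp) (by simp),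
            wlen_cons ℓ i' (b :: t') (by simp)]
          have e2 : ((a :: s') ++ [i']).getLast (by simp) = i' := by
            simp
          rw [e2]
          simp only [List.head_cons]
          ring
    have := hub i' _ hA
    have hπi : π i = wlen ℓ (s ++ [i']) + wlen ℓ (i' :: t) := by rw [hval, hsplit]
    linarith
  · -- extend l by i'
    have hext : (l ++ [i']) ∈ walkSet E i' := by
      refine mem_walkSet.2 ⟨by simp, ?_, ?_, by simp⟩
      · refine List.IsChain.append hchain (List.isChain_singleton i') ?_
        intro x hx y hy
        rw [List.getLast?_eq_getLast hne] at hx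
        simp only [Option.mem_def, Option.some.injEq] at hx
        simp only [List.head?_cons, Option.mem_def, Option.some.injEq] at hy
        rw [← hx, ← hy, hlastl]
        exact hE
      · rw [List.nodup_append]
        exact ⟨hnodup, by simp, by
          intro a ha b hb h; simp at hb; subst hb; exact hmem (h ▸ ha)⟩
    have := hub i' _ hext
    rw [wlen_concat ℓ l hne i', hlastl] at this
    linarith


lemma map_sub_sum (p q : Fin n → ℝ) : ∀ (l : List (Fin n)),
    (l.map (fun a => p a - q a)).sum = (l.map p).sum - (l.map q).sum
  | [] => by simp
  | a :: l => by simp [map_sub_sum p q l]; ring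

lemma map_formPerm_eq (f : Fin n → Fin n → ℝ) (m : List (Fin n)) (hm : m.Nodup) :
    m.map (fun i => f i (m.formPerm i)) = List.zipWith f m (m.rotate 1) := by
  apply List.ext_getElem (by simp)
  intro t h1 h2
  simp only [List.getElem_map, List.getElem_zipWith, List.getElem_rotate]
  rw [List.formPerm_apply_getElem m hm t (by simpa using h1)]

lemma rotate_one_eq (m : List (Fin n)) (hm : m ≠ []) :
    m.rotate 1 = m.tail ++ [m.head hm] := by
  cases m with
  | nil => exact absurd rfl hm
  | cons a t => simp [List.rotate_cons_succ]

lemma exists_dual (w : Fin n → Fin n → ℝ) (E : Fin n → Fin n → Prop)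
    (σ : Equiv.Perm (Fin n)) (hσ : ∀ i, E i (σ i))
    (hmax : ∀ τ : Equiv.Perm (Fin n), (∀ i, E i (τ i)) → ∑ i, w i (τ i) ≤ ∑ i, w i (σ i)) :
    ∃ u v : Fin n → ℝ, (∀ i j, E i j → w i j ≤ u i + v j) ∧
      ∑ i, u i + ∑ j, v j = ∑ i, w i (σ i) := by
  classical
  set E' : Fin n → Fin n → Prop := fun i i' => E i (σ i') with hE'
  set ℓ : Fin n → Fin n → ℝ :=
    fun i i' => (fun i i' => w i (σ i')) i i' - (fun i i' => w i' (σ i')) i i' with hℓ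
  have hcyc : ∀ (m : List (Fin n)) (hm : m ≠ []), m.Nodup → m.Chain' E' →
      E' (m.getLast hm) (m.head hm) → wlen ℓ m + ℓ (m.getLast hm) (m.head hm) ≤ 0 := by
    intro m hm hnodup hchain hclose
    set c := m.formPerm with hc
    have hEc : ∀ i ∈ m, E' i (c i) := by
      intro i hi
      obtain ⟨t, ht, rfl⟩ := List.getElem_of_mem hi
      rw [hc, List.formPerm_apply_getElem m hnodup t ht]
      rcases Nat.lt_or_ge (t + 1) m.length with h | h
      · have hmod : (t + 1) % m.length = t + 1 := Nat.mod_eq_of_lt h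
        have := List.isChain_iff_getElem.1 hchain t (by omega)
        convert this using 2
      · have hlen : t = m.length - 1 := by omega
        have hmod : (t + 1) % m.length = 0 := by
          have : t + 1 = m.length := by omega
          simp [this]
        subst hlen
        have h0 : m[(m.length - 1 + 1) % m.length] = m.head hm := by
          simp only [hmod]
          exact List.getElem_zero (by omega)
        have hlastt : m[m.length - 1] = m.getLast hm := by
          rw [List.getLast_eq_getElem hm]
        rw [h0, hlastt]
        exact hclose
    set τ : Equiv.Perm (Fin n) := σ * c with hτ
    have hτi : ∀ i, τ i = σ (c i) := fun i => Equiv.Perm.mul_apply σ c i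
    have hτE : ∀ i, E i (τ i) := by
      intro i
      rw [hτi]
      by_cases hi : i ∈ m
      · exact hEc i hi
      · rw [hc, List.formPerm_apply_of_notMem hi]
        exact hσ i
    have hsum := hmax τ hτE
    have hzero : ∀ i ∈ Finset.univ, i ∉ m.toFinset →
        w i (σ (c i)) - w i (σ i) = 0 := by
      intro i _ hi
      rw [hc, List.formPerm_apply_of_notMem (by simpa using hi)]
      ring
    have hres : ∑ i ∈ m.toFinset, (w i (σ (c i)) - w i (σ i)) ≤ 0 := by
      rw [Finset.sum_subset (Finset.subset_univ m.toFinset) hzero,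
        Finset.sum_sub_distrib]
      have : ∑ i, w i (σ (c i)) = ∑ i, w i (τ i) := by
        simp only [hτi]
      rw [this]
      linarith
    -- compute the restricted sum as the cycle length
    have hcomp : ∑ i ∈ m.toFinset, (w i (σ (c i)) - w i (σ i))
        = wlen ℓ m + ℓ (m.getLast hm) (m.head hm) := by
      rw [List.sum_toFinset _ hnodup, map_sub_sum]
      have hA : (m.map fun i => w i (σ (c i))).sum
          = (List.zipWith (fun i i' => w i (σ i')) m (m.rotate 1)).sum := by
        rw [hc, map_formPerm_eq (fun i i' => w i (σ i')) m hnodup]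
      have hB : (m.map fun i => w i (σ i)).sum
          = (List.zipWith (fun i i' => w i' (σ i')) m (m.rotate 1)).sum := by
        rw [zipWith_snd_map (fun i => w i (σ i)) m (m.rotate 1) (by simp)]
        exact (((m.rotate_perm 1).map _).sum_eq).symm
      rw [hA, hB, ← zipWith_sub_sum, ← hℓ, rotate_one_eq m hm,
        zip_tail_concat_sum ℓ m hm]
    linarith [hcomp ▸ hres]
  obtain ⟨π, hπ⟩ := exists_potential E' ℓ hcyc
  refine ⟨fun i => -π i, fun j => w (σ.symm j) j + π (σ.symm j), ?_, ?_⟩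
  · intro i j hEij
    have hE'ij : E' i (σ.symm j) := by
      simp only [hE', Equiv.apply_symm_apply]
      exact hEij
    have := hπ i (σ.symm j) hE'ij
    simp only [hℓ, Equiv.apply_symm_apply] at this
    show w i j ≤ -π i + (w (σ.symm j) j + π (σ.symm j))
    linarith
  · have h1 : ∑ j, (w (σ.symm j) j + π (σ.symm j)) = ∑ i, (w i (σ i) + π i) := by
      rw [← Equiv.sum_comp σ (fun j => w (σ.symm j) j + π (σ.symm j))]
      simp only [Equiv.symm_apply_apply]
    rw [h1, Finset.sum_add_distrib]
    have h2 : ∑ i, (fun i => -π i) i = -∑ i, π i := by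
      simp
    rw [h2]
    ring


lemma exists_support_perm (X : Matrix (Fin n) (Fin n) ℝ)
    (hnonneg : ∀ i j, 0 ≤ X i j) (hrow : ∀ i, ∑ j, X i j = 1)
    (hcol : ∀ j, ∑ i, X i j = 1) :
    ∃ σ : Equiv.Perm (Fin n), ∀ i, 0 < X i (σ i) := by
  classical
  set t : Fin n → Finset (Fin n) := fun i => Finset.univ.filter (fun j => 0 < X i j) with ht
  have hall : ∀ s : Finset (Fin n), s.card ≤ (s.biUnion t).card := by
    intro s
    have key : (s.card : ℝ) ≤ ((s.biUnion t).card : ℝ) := by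
      have h1 : (s.card : ℝ) = ∑ i ∈ s, ∑ j, X i j := by
        simp [hrow]
      have h2 : ∀ i ∈ s, ∑ j, X i j = ∑ j ∈ s.biUnion t, X i j := by
        intro i hi
        refine (Finset.sum_subset (Finset.subset_univ _) ?_).symm
        intro j _ hj
        have hjt : j ∉ t i := fun hj' => hj (Finset.mem_biUnion.2 ⟨i, hi, hj'⟩)
        have : ¬ 0 < X i j := by simpa [ht] using hjt
        linarith [hnonneg i j]
      have h3 : (s.card : ℝ) = ∑ j ∈ s.biUnion t, ∑ i ∈ s, X i j := by
        rw [h1, Finset.sum_congr rfl h2, Finset.sum_comm]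
      have h4 : ∀ j ∈ s.biUnion t, ∑ i ∈ s, X i j ≤ 1 := by
        intro j _
        rw [← hcol j]
        apply Finset.sum_le_sum_of_subset_of_nonneg (Finset.subset_univ s)
        intro i _ _
        exact hnonneg i j
      calc (s.card : ℝ) = ∑ j ∈ s.biUnion t, ∑ i ∈ s, X i j := h3
        _ ≤ ∑ j ∈ s.biUnion t, (1 : ℝ) := Finset.sum_le_sum h4
        _ = ((s.biUnion t).card : ℝ) := by simp
    exact_mod_cast key
  obtain ⟨f, hinj, hf⟩ := (Finset.all_card_le_biUnion_card_iff_exists_injective t).1 hall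
  refine ⟨Equiv.ofBijective f ((Finite.injective_iff_bijective).1 hinj), fun i => ?_⟩
  have := hf i
  simp only [ht, Finset.mem_filter] at this
  exact this.2

end DWAux

/-- Duality characterization of the diagonal width of a doubly stochastic matrix
`X`: the maximum `Dmax` and minimum `Dmin` diagonal sums over permutations
avoiding the zeros of `X` are attained, the dual optima `θ* = θhi` (minimum of
`∑ uᵢ + ∑ vⱼ` subject to `uᵢ + vⱼ ≥ x_ij` on the support) and `θ_* = θlo`
(maximum of `∑ uᵢ + ∑ vⱼ` subject to `uᵢ + vⱼ ≤ x_ij` on the support) are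
attained, and `DW(X) = Dmax - Dmin = θhi - θlo`. -/
theorem diagonal_width_duality {n : ℕ} (X : Matrix (Fin n) (Fin n) ℝ)
    (hnonneg : ∀ i j, 0 ≤ X i j)
    (hrow : ∀ i, ∑ j, X i j = 1)
    (hcol : ∀ j, ∑ i, X i j = 1) :
    ∃ Dmax Dmin θhi θlo : ℝ,
      (∃ σ : Equiv.Perm (Fin n), (∀ i, 0 < X i (σ i)) ∧ ∑ i, X i (σ i) = Dmax) ∧
      (∀ σ : Equiv.Perm (Fin n), (∀ i, 0 < X i (σ i)) → ∑ i, X i (σ i) ≤ Dmax) ∧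
      (∃ σ : Equiv.Perm (Fin n), (∀ i, 0 < X i (σ i)) ∧ ∑ i, X i (σ i) = Dmin) ∧
      (∀ σ : Equiv.Perm (Fin n), (∀ i, 0 < X i (σ i)) → Dmin ≤ ∑ i, X i (σ i)) ∧
      (∃ u v : Fin n → ℝ, (∀ i j, 0 < X i j → X i j ≤ u i + v j) ∧
          ∑ i, u i + ∑ j, v j = θhi) ∧
      (∀ u v : Fin n → ℝ, (∀ i j, 0 < X i j → X i j ≤ u i + v j) →
          θhi ≤ ∑ i, u i + ∑ j, v j) ∧
      (∃ u v : Fin n → ℝ, (∀ i j, 0 < X i j → u i + v j ≤ X i j) ∧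
          ∑ i, u i + ∑ j, v j = θlo) ∧
      (∀ u v : Fin n → ℝ, (∀ i j, 0 < X i j → u i + v j ≤ X i j) →
          ∑ i, u i + ∑ j, v j ≤ θlo) ∧
      Dmax - Dmin = θhi - θlo := by
  classical
  obtain ⟨σ₀, hσ₀⟩ := DWAux.exists_support_perm X hnonneg hrow hcol
  set P : Finset (Equiv.Perm (Fin n)) :=
    Finset.univ.filter (fun σ => ∀ i, 0 < X i (σ i)) with hP
  have hPmem : ∀ σ : Equiv.Perm (Fin n), σ ∈ P ↔ ∀ i, 0 < X i (σ i) := by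
    intro σ
    simp [hP]
  have hPne : P.Nonempty := ⟨σ₀, (hPmem σ₀).2 hσ₀⟩
  set f : Equiv.Perm (Fin n) → ℝ := fun σ => ∑ i, X i (σ i) with hf
  set Dmax := P.sup' hPne f with hDmax
  set Dmin := P.inf' hPne f with hDmin
  obtain ⟨σM, hσMP, hσMval⟩ := Finset.exists_mem_eq_sup' hPne f
  obtain ⟨σm, hσmP, hσmval⟩ := Finset.exists_mem_eq_inf' hPne f
  have hσM := (hPmem σM).1 hσMP
  have hσm := (hPmem σm).1 hσmP
  have hMv : Dmax = ∑ i, X i (σM i) := hσMval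
  have hmv : Dmin = ∑ i, X i (σm i) := hσmval
  have hmaxle : ∀ σ : Equiv.Perm (Fin n), (∀ i, 0 < X i (σ i)) → ∑ i, X i (σ i) ≤ Dmax :=
    fun σ hσ => Finset.le_sup' f ((hPmem σ).2 hσ)
  have hminle : ∀ σ : Equiv.Perm (Fin n), (∀ i, 0 < X i (σ i)) → Dmin ≤ ∑ i, X i (σ i) :=
    fun σ hσ => Finset.inf'_le f ((hPmem σ).2 hσ)
  -- strong duality, upper side
  obtain ⟨u₁, v₁, hfeas₁, hval₁⟩ := DWAux.exists_dual X (fun i j => 0 < X i j) σM hσM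
    (fun τ hτ => hMv ▸ hmaxle τ hτ)
  -- strong duality, lower side (apply to -X)
  obtain ⟨u₂, v₂, hfeas₂, hval₂⟩ := DWAux.exists_dual (fun i j => -X i j)
    (fun i j => 0 < X i j) σm hσm
    (by
      intro τ hτ
      have := hminle τ hτ
      simp only [Finset.sum_neg_distrib]
      linarith [hmv ▸ hminle τ hτ])
  refine ⟨Dmax, Dmin, Dmax, Dmin, ⟨σM, hσM, hMv.symm⟩, hmaxle,
    ⟨σm, hσm, hmv.symm⟩, hminle, ⟨u₁, v₁, hfeas₁, by rw [hval₁]; exact hMv.symm⟩, ?_,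
    ⟨fun i => -u₂ i, fun j => -v₂ j, ?_, ?_⟩, ?_, rfl⟩
  · -- weak duality hi
    intro u v hfeas
    have h1 := hMv
    have h2 : ∑ i, X i (σM i) ≤ ∑ i, (u i + v (σM i)) :=
      Finset.sum_le_sum (fun i _ => hfeas i (σM i) (hσM i))
    have h3 : ∑ i, (u i + v (σM i)) = ∑ i, u i + ∑ j, v j := by
      rw [Finset.sum_add_distrib, Equiv.sum_comp σM v]
    linarith
  · intro i j hij
    have := hfeas₂ i j hij
    show -u₂ i + -v₂ j ≤ X i j
    linarith
  · have h2 := hmv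
    have h3 : ∑ i, (fun i => -u₂ i) i + ∑ j, (fun j => -v₂ j) j
        = -(∑ i, u₂ i + ∑ j, v₂ j) := by
      simp [Finset.sum_neg_distrib]
      ring
    rw [h3, hval₂]
    simp only [Finset.sum_neg_distrib] at *
    simp [h2]
  · -- weak duality lo
    intro u v hfeas
    have h1 := hmv
    have h2 : ∑ i, (u i + v (σm i)) ≤ ∑ i, X i (σm i) :=
      Finset.sum_le_sum (fun i _ => hfeas i (σm i) (hσm i))
    have h3 : ∑ i, (u i + v (σm i)) = ∑ i, u i + ∑ j, v j := by
      rw [Finset.sum_add_distrib, Equiv.sum_comp σm v]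
    linarith
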